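/- Let h : [-1,1] → ℝ be C¹ with h(1) > 0, and suppose there exists y⋆ ∈ [0,1) with 2h(y⋆) = √(1-y⋆²). Then the set {y ∈ [0,1) : 2h(y) = √(1-y²)} has a maximum y₀, and any maximal orbit γ = (x,y) : (0,b) → Θ of F₁ with γ(s) → (0,1) as s → 0⁺ satisfies: b = ∞; x is strictly increasing with x(s) → ∞ as s → ∞; and y is strictly decreasing with y(s) > y₀ for all s and y(s) → y₀ as s → ∞. -/

import Mathlib

open Filter Set

/-- The vector field `F_ε` of the phase plane system: `F_ε(x,y) =
(y, (1-y²)/tanh x − 2ε·h(y)·√(1-y²))`. -/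
noncomputable def F (h : ℝ → ℝ) (ε : ℝ) (p : ℝ × ℝ) : ℝ × ℝ :=
  (p.2, (1 - p.2 ^ 2) / Real.tanh p.1 - 2 * ε * h p.2 * Real.sqrt (1 - p.2 ^ 2))

/-- The phase plane `Θ = (0,∞) × (-1,1)`. -/
def PhasePlane : Set (ℝ × ℝ) := Set.Ioi (0 : ℝ) ×ˢ Set.Ioo (-1 : ℝ) 1

/-- `γ` is an orbit of `F_ε` on the open interval `I`: it takes values in `Θ` and solves
`γ' = F_ε ∘ γ` on `I`. -/
def IsOrbitOn (h : ℝ → ℝ) (ε : ℝ) (γ : ℝ → ℝ × ℝ) (I : Set ℝ) : Prop :=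
  IsOpen I ∧ I.OrdConnected ∧ ∀ s ∈ I, γ s ∈ PhasePlane ∧ HasDerivAt γ (F h ε (γ s)) s

/-- A maximal orbit: an orbit admitting no extension to a solution on a strictly
larger interval. -/
def IsMaxOrbitOn (h : ℝ → ℝ) (ε : ℝ) (γ : ℝ → ℝ × ℝ) (I : Set ℝ) : Prop :=
  IsOrbitOn h ε γ I ∧
    ∀ (δ : ℝ → ℝ × ℝ) (J : Set ℝ), IsOrbitOn h ε δ J → I ⊆ J → Set.EqOn δ γ I → J = I

/-- The open interval of reals with (possibly infinite) extended-real endpoints. -/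
def EIoo (a b : EReal) : Set ℝ := {s : ℝ | a < (s : EReal) ∧ (s : EReal) < b}

/-- The inverse hyperbolic tangent. -/
noncomputable def arctanh (x : ℝ) : ℝ := Real.log ((1 + x) / (1 - x)) / 2

open Topology


lemma my_tanh_pos {x : ℝ} (hx : 0 < x) : 0 < Real.tanh x := by
  rw [Real.tanh_eq_sinh_div_cosh]
  exact div_pos (by rwa [Real.sinh_pos_iff]) (Real.cosh_pos x)

lemma my_tanh_lt_one (x : ℝ) : Real.tanh x < 1 := by
  rw [Real.tanh_eq_sinh_div_cosh, div_lt_one (Real.cosh_pos x)]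
  exact Real.sinh_lt_cosh x

lemma my_tanh_ne_zero {x : ℝ} (hx : 0 < x) : Real.tanh x ≠ 0 := ne_of_gt (my_tanh_pos hx)

lemma my_hasDerivAt_tanh (x : ℝ) : HasDerivAt Real.tanh (1 / Real.cosh x ^ 2) x := by
  have h : HasDerivAt (fun y => Real.sinh y / Real.cosh y)
      ((Real.cosh x * Real.cosh x - Real.sinh x * Real.sinh x) / Real.cosh x ^ 2) x :=
    (Real.hasDerivAt_sinh x).div (Real.hasDerivAt_cosh x) (ne_of_gt (Real.cosh_pos x))
  have : (Real.cosh x * Real.cosh x - Real.sinh x * Real.sinh x) = 1 := by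
    have := Real.cosh_sq_sub_sinh_sq x; nlinarith [this]
  rw [this] at h
  exact h.congr_of_eventuallyEq (Filter.Eventually.of_forall fun y => (Real.tanh_eq_sinh_div_cosh y))

lemma my_contDiff_tanh : ContDiff ℝ 1 Real.tanh := by
  have : Real.tanh = fun x => Real.sinh x / Real.cosh x := funext Real.tanh_eq_sinh_div_cosh
  rw [this]
  exact Real.contDiff_sinh.div Real.contDiff_cosh fun x => ne_of_gt (Real.cosh_pos x)

lemma my_tanh_eq (x : ℝ) : Real.tanh x = (1 - Real.exp (-2*x)) / (1 + Real.exp (-2*x)) := by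
  have h1 : Real.exp x ≠ 0 := Real.exp_ne_zero x
  have h2 : (0:ℝ) < 1 + Real.exp (-2*x) := by positivity
  rw [Real.tanh_eq_sinh_div_cosh, Real.sinh_eq, Real.cosh_eq]
  have e1 : Real.exp (-(2*x)) = Real.exp (-x) * Real.exp (-x) := by
    rw [← Real.exp_add]; ring_nf
  have e2 : Real.exp x * Real.exp (-x) = 1 := by rw [← Real.exp_add]; simp
  field_simp
  linear_combination (norm := ring_nf) (2*Real.exp x) * e1 + (2*Real.exp (-x)) * e2

lemma my_tendsto_tanh_atTop : Tendsto Real.tanh atTop (𝓝 1) := by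
  have h0 : Tendsto (fun x : ℝ => Real.exp (-2*x)) atTop (𝓝 0) := by
    apply Real.tendsto_exp_atBot.comp
    exact Tendsto.const_mul_atTop_of_neg (by norm_num) tendsto_id |>.congr (fun x => rfl)
  have : Tendsto (fun x : ℝ => (1 - Real.exp (-2*x)) / (1 + Real.exp (-2*x))) atTop (𝓝 ((1-0)/(1+0))) := by
    apply Tendsto.div ((tendsto_const_nhds).sub h0) ((tendsto_const_nhds).add h0) (by norm_num)
  simp only [sub_zero, add_zero, div_one] at this
  exact this.congr fun x => (my_tanh_eq x).symm

lemma sq_lt_one_of_mem {y : ℝ} (hy : y ∈ Set.Ioo (-1:ℝ) 1) : y^2 < 1 := by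
  nlinarith [hy.1, hy.2]

lemma one_sub_sq_pos {y : ℝ} (hy : y ∈ Set.Ioo (-1:ℝ) 1) : 0 < 1 - y^2 := by
  nlinarith [hy.1, hy.2]

lemma contDiffAt_F {h : ℝ → ℝ} (hC : ContDiffOn ℝ 1 h (Set.Icc (-1 : ℝ) 1))
    {p : ℝ × ℝ} (hp : p ∈ PhasePlane) : ContDiffAt ℝ 1 (F h 1) p := by
  obtain ⟨hp1, hp2⟩ := hp
  simp only [mem_Ioi] at hp1
  have hy2 : 0 < 1 - p.2^2 := one_sub_sq_pos hp2
  have htanh : Real.tanh p.1 ≠ 0 := ne_of_gt (my_tanh_pos hp1)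
  have c1 : ContDiffAt ℝ 1 (fun q : ℝ × ℝ => 1 - q.2 ^ 2) p :=
    (contDiffAt_const (c := (1:ℝ))).sub (contDiffAt_snd.pow 2)
  have c2 : ContDiffAt ℝ 1 (fun q : ℝ × ℝ => Real.tanh q.1) p :=
    (my_contDiff_tanh.comp contDiff_fst).contDiffAt
  have c3 : ContDiffAt ℝ 1 (fun q : ℝ × ℝ => h q.2) p :=
    (hC.contDiffAt (Icc_mem_nhds (by linarith [hp2.1]) (by linarith [hp2.2]))).comp p contDiffAt_snd
  have c4 : ContDiffAt ℝ 1 (fun q : ℝ × ℝ => Real.sqrt (1 - q.2 ^ 2)) p :=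
    (Real.contDiffAt_sqrt (ne_of_gt hy2)).comp p c1
  exact (contDiffAt_snd).prodMk (((c1.div c2 htanh)).sub
    (((contDiffAt_const (c := (2*1:ℝ))).mul c3).mul c4))

lemma hasDerivAt_comp_fst {γ : ℝ → ℝ × ℝ} {v : ℝ × ℝ} {s : ℝ} (hγ : HasDerivAt γ v s) :
    HasDerivAt (fun t => (γ t).1) v.1 s :=
  (ContinuousLinearMap.fst ℝ ℝ ℝ).hasFDerivAt.comp_hasDerivAt s hγ

lemma hasDerivAt_comp_snd {γ : ℝ → ℝ × ℝ} {v : ℝ × ℝ} {s : ℝ} (hγ : HasDerivAt γ v s) :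
    HasDerivAt (fun t => (γ t).2) v.2 s :=
  (ContinuousLinearMap.snd ℝ ℝ ℝ).hasFDerivAt.comp_hasDerivAt s hγ

lemma eventually_lt_right {f : ℝ → ℝ} {d s : ℝ} (hf : HasDerivAt f d s) (hd : d < 0) :
    ∀ᶠ t in 𝓝[>] s, f t < f s := by
  have hs : Tendsto (slope f s) (𝓝[>] s) (𝓝 d) :=
    (hasDerivAt_iff_tendsto_slope.mp hf).mono_left
      (nhdsWithin_mono _ (fun t ht => ne_of_gt ht))
  filter_upwards [hs.eventually_lt_const hd, self_mem_nhdsWithin] with t hslope hts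
  rw [slope_def_field] at hslope
  have h1 : 0 < t - s := sub_pos.mpr hts
  nlinarith [(div_lt_iff₀ h1).mp hslope]

lemma eventually_gt_left {f : ℝ → ℝ} {d s : ℝ} (hf : HasDerivAt f d s) (hd : d < 0) :
    ∀ᶠ t in 𝓝[<] s, f s < f t := by
  have hs : Tendsto (slope f s) (𝓝[<] s) (𝓝 d) :=
    (hasDerivAt_iff_tendsto_slope.mp hf).mono_left
      (nhdsWithin_mono _ (fun t ht => ne_of_lt ht))
  filter_upwards [hs.eventually_lt_const hd, self_mem_nhdsWithin] with t hslope hts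
  rw [slope_def_field] at hslope
  have h1 : t - s < 0 := sub_neg.mpr hts
  nlinarith [(div_lt_iff_of_neg h1).mp hslope]

lemma eventually_gt_right {f : ℝ → ℝ} {d s : ℝ} (hf : HasDerivAt f d s) (hd : 0 < d) :
    ∀ᶠ t in 𝓝[>] s, f s < f t := by
  have hs : Tendsto (slope f s) (𝓝[>] s) (𝓝 d) :=
    (hasDerivAt_iff_tendsto_slope.mp hf).mono_left
      (nhdsWithin_mono _ (fun t ht => ne_of_gt ht))
  filter_upwards [hs.eventually_const_lt hd, self_mem_nhdsWithin] with t hslope hts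
  rw [slope_def_field] at hslope
  have h1 : 0 < t - s := sub_pos.mpr hts
  nlinarith [(lt_div_iff₀ h1).mp hslope]

lemma eventually_lt_left {f : ℝ → ℝ} {d s : ℝ} (hf : HasDerivAt f d s) (hd : 0 < d) :
    ∀ᶠ t in 𝓝[<] s, f t < f s := by
  have hs : Tendsto (slope f s) (𝓝[<] s) (𝓝 d) :=
    (hasDerivAt_iff_tendsto_slope.mp hf).mono_left
      (nhdsWithin_mono _ (fun t ht => ne_of_lt ht))
  filter_upwards [hs.eventually_const_lt hd, self_mem_nhdsWithin] with t hslope hts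
  rw [slope_def_field] at hslope
  have h1 : t - s < 0 := sub_neg.mpr hts
  nlinarith [(lt_div_iff_of_neg h1).mp hslope]

noncomputable def Ufun (h : ℝ → ℝ) (γ : ℝ → ℝ × ℝ) (s : ℝ) : ℝ :=
  Real.sqrt (1 - (γ s).2 ^ 2) - 2 * h ((γ s).2) * Real.tanh ((γ s).1)

section Core

variable {h : ℝ → ℝ} {γ : ℝ → ℝ × ℝ} {I : Set ℝ}

lemma orbit_mem (horb : IsOrbitOn h 1 γ I) {s : ℝ} (hs : s ∈ I) :
    0 < (γ s).1 ∧ -1 < (γ s).2 ∧ (γ s).2 < 1 := by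
  have := (horb.2.2 s hs).1
  exact ⟨this.1, this.2.1, this.2.2⟩

lemma xdiff (horb : IsOrbitOn h 1 γ I) {s : ℝ} (hs : s ∈ I) :
    HasDerivAt (fun t => (γ t).1) ((γ s).2) s :=
  hasDerivAt_comp_fst (horb.2.2 s hs).2

lemma ydiff (horb : IsOrbitOn h 1 γ I) {s : ℝ} (hs : s ∈ I) :
    HasDerivAt (fun t => (γ t).2) ((F h 1 (γ s)).2) s :=
  hasDerivAt_comp_snd (horb.2.2 s hs).2

lemma yderiv_eq (horb : IsOrbitOn h 1 γ I) {s : ℝ} (hs : s ∈ I) :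
    (F h 1 (γ s)).2 =
      Real.sqrt (1 - (γ s).2 ^ 2) * Ufun h γ s / Real.tanh ((γ s).1) := by
  obtain ⟨hx, hy1, hy2⟩ := orbit_mem horb hs
  have hypos : 0 < 1 - (γ s).2 ^ 2 := one_sub_sq_pos ⟨hy1, hy2⟩
  have hsq : Real.sqrt (1 - (γ s).2 ^ 2) ^ 2 = 1 - (γ s).2 ^ 2 :=
    Real.sq_sqrt (le_of_lt hypos)
  have htanh : Real.tanh ((γ s).1) ≠ 0 := my_tanh_ne_zero hx
  simp only [F, Ufun]
  field_simp
  linear_combination -hsq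

lemma sqrt_one_sub_sq_pos {y : ℝ} (h1 : -1 < y) (h2 : y < 1) : 0 < Real.sqrt (1 - y ^ 2) :=
  Real.sqrt_pos.mpr (one_sub_sq_pos ⟨h1, h2⟩)

lemma yderiv_neg (horb : IsOrbitOn h 1 γ I) {s : ℝ} (hs : s ∈ I) (hU : Ufun h γ s < 0) :
    (F h 1 (γ s)).2 < 0 := by
  obtain ⟨hx, hy1, hy2⟩ := orbit_mem horb hs
  rw [yderiv_eq horb hs]
  exact div_neg_of_neg_of_pos
    (mul_neg_of_pos_of_neg (sqrt_one_sub_sq_pos hy1 hy2) hU) (my_tanh_pos hx)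

lemma yderiv_pos (horb : IsOrbitOn h 1 γ I) {s : ℝ} (hs : s ∈ I) (hU : 0 < Ufun h γ s) :
    0 < (F h 1 (γ s)).2 := by
  obtain ⟨hx, hy1, hy2⟩ := orbit_mem horb hs
  rw [yderiv_eq horb hs]
  exact div_pos (mul_pos (sqrt_one_sub_sq_pos hy1 hy2) hU) (my_tanh_pos hx)

lemma yderiv_zero (horb : IsOrbitOn h 1 γ I) {s : ℝ} (hs : s ∈ I) (hU : Ufun h γ s = 0) :
    (F h 1 (γ s)).2 = 0 := by
  rw [yderiv_eq horb hs, hU, mul_zero, zero_div]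

lemma h_pos_at_U_zero (horb : IsOrbitOn h 1 γ I) {s : ℝ} (hs : s ∈ I)
    (hU : Ufun h γ s = 0) : 0 < h ((γ s).2) := by
  obtain ⟨hx, hy1, hy2⟩ := orbit_mem horb hs
  have h1 : 0 < Real.sqrt (1 - (γ s).2 ^ 2) := sqrt_one_sub_sq_pos hy1 hy2
  have h2 : 0 < Real.tanh ((γ s).1) := my_tanh_pos hx
  have h3 : Real.tanh ((γ s).1) < 1 := my_tanh_lt_one _
  simp only [Ufun, sub_eq_zero] at hU
  nlinarith

lemma hasDerivAt_U (hC : ContDiffOn ℝ 1 h (Set.Icc (-1 : ℝ) 1))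
    (horb : IsOrbitOn h 1 γ I) {s : ℝ} (hs : s ∈ I) (hU : Ufun h γ s = 0) :
    HasDerivAt (Ufun h γ)
      (-(2 * h ((γ s).2) * (1 / Real.cosh ((γ s).1) ^ 2) * (γ s).2)) s := by
  obtain ⟨hx, hy1, hy2⟩ := orbit_mem horb hs
  have hypos : 0 < 1 - (γ s).2 ^ 2 := one_sub_sq_pos ⟨hy1, hy2⟩
  have hy' : HasDerivAt (fun t => (γ t).2) 0 s := by
    have := ydiff horb hs
    rwa [yderiv_zero horb hs hU] at this
  have hx' : HasDerivAt (fun t => (γ t).1) ((γ s).2) s := xdiff horb hs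
  have hinner : HasDerivAt (fun t => 1 - (γ t).2 ^ 2) (-((2:ℕ) * (γ s).2 ^ 1 * 0)) s :=
    (hy'.pow 2).const_sub 1
  have hsqrt : HasDerivAt (fun t => Real.sqrt (1 - (γ t).2 ^ 2))
      ((-((2:ℕ) * (γ s).2 ^ 1 * 0)) / (2 * Real.sqrt (1 - (γ s).2 ^ 2))) s :=
    hinner.sqrt (ne_of_gt hypos)
  have hdiffh : DifferentiableAt ℝ h ((γ s).2) :=
    (hC.contDiffAt (Icc_mem_nhds hy1 hy2)).differentiableAt one_ne_zero
  have hh : HasDerivAt (fun t => h ((γ t).2)) (deriv h ((γ s).2) * 0) s :=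
    (hdiffh.hasDerivAt).comp s hy'
  have htanh : HasDerivAt (fun t => Real.tanh ((γ t).1))
      ((1 / Real.cosh ((γ s).1) ^ 2) * (γ s).2) s :=
    by have := (my_hasDerivAt_tanh ((γ s).1)).comp s hx'; exact this
  have hB : HasDerivAt (fun t => 2 * h ((γ t).2) * Real.tanh ((γ t).1))
      ((2 * (deriv h ((γ s).2) * 0)) * Real.tanh ((γ s).1)
        + (2 * h ((γ s).2)) * ((1 / Real.cosh ((γ s).1) ^ 2) * (γ s).2)) s :=
    (hh.const_mul 2).mul htanh
  have := hsqrt.sub hB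
  refine this.congr_deriv ?_
  push_cast
  ring

end Core

section Core2

variable {h : ℝ → ℝ} {γ : ℝ → ℝ × ℝ} {I : Set ℝ} {y₀ : ℝ}

lemma ycont (horb : IsOrbitOn h 1 γ I) {s : ℝ} (hs : s ∈ I) :
    ContinuousAt (fun t => (γ t).2) s := (ydiff horb hs).continuousAt

lemma Ucont (hC : ContDiffOn ℝ 1 h (Set.Icc (-1 : ℝ) 1)) (horb : IsOrbitOn h 1 γ I)
    {s : ℝ} (hs : s ∈ I) : ContinuousAt (Ufun h γ) s := by
  obtain ⟨hx, hy1, hy2⟩ := orbit_mem horb hs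
  have hγ : ContinuousAt γ s := (horb.2.2 s hs).2.continuousAt
  have h1 : ContinuousAt (fun t => Real.sqrt (1 - (γ t).2 ^ 2)) s :=
    Real.continuous_sqrt.continuousAt.comp
      ((continuousAt_const.sub ((hγ.snd).pow 2)))
  have h2 : ContinuousAt (fun t => h ((γ t).2)) s :=
    ContinuousAt.comp (g := h) (f := fun t => (γ t).2)
      ((hC.contDiffAt (Icc_mem_nhds hy1 hy2)).continuousAt) hγ.snd
  have h3 : ContinuousAt (fun t => Real.tanh ((γ t).1)) s :=
    ContinuousAt.comp (g := Real.tanh) (f := fun t => (γ t).1)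
      my_contDiff_tanh.continuous.continuousAt hγ.fst
  exact h1.sub ((continuousAt_const.mul h2).mul h3)

/-- Forward invariance of `{y > y₀}`. -/
lemma y_gt_y0 (horb : IsOrbitOn h 1 γ I)
    (hpos : ∀ ⦃s : ℝ⦄, s ∈ I → 0 < s)
    (hdc : ∀ ⦃s t : ℝ⦄, s ∈ I → 0 < t → t ≤ s → t ∈ I)
    (hlim : Tendsto (fun s => (γ s).2) (𝓝[>] (0:ℝ)) (𝓝 1))
    (hy₀mem : y₀ ∈ Set.Ico (0:ℝ) 1) (hy₀eq : 2 * h y₀ = Real.sqrt (1 - y₀ ^ 2))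
    {s' : ℝ} (hs' : s' ∈ I) : y₀ < (γ s').2 := by
  by_contra hcon
  push_neg at hcon
  have hs'pos : 0 < s' := hpos hs'
  have hev : ∀ᶠ s in 𝓝[>] (0:ℝ), y₀ < (γ s).2 := hlim.eventually_const_lt hy₀mem.2
  obtain ⟨δ₀, hδ₀, hIoo⟩ := mem_nhdsGT_iff_exists_Ioo_subset.mp hev
  rw [mem_Ioi] at hδ₀
  set c := min (δ₀/2) s' with hc
  have hcpos : 0 < c := lt_min (by linarith) hs'pos
  have hcI : c ∈ I := hdc hs' hcpos (min_le_right _ _)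
  have hcy : y₀ < (γ c).2 :=
    hIoo ⟨hcpos, lt_of_le_of_lt (min_le_left _ _) (by linarith)⟩
  have hcs' : c < s' :=
    lt_of_le_of_ne (min_le_right _ _) (fun he => by rw [he] at hcy; linarith)
  set A := {t ∈ Icc c s' | (γ t).2 ≤ y₀} with hA
  have hAne : A.Nonempty := ⟨s', ⟨hcs'.le, le_rfl⟩, hcon⟩
  have hAbdd : BddBelow A := ⟨c, fun a ha => ha.1.1⟩
  set t₀ := sInf A with ht₀
  have hct₀ : c ≤ t₀ := le_csInf hAne fun a ha => ha.1.1
  have ht₀s' : t₀ ≤ s' := csInf_le hAbdd ⟨⟨hcs'.le, le_rfl⟩, hcon⟩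
  have ht₀I : t₀ ∈ I := hdc hs' (lt_of_lt_of_le hcpos hct₀) ht₀s'
  have hclos : t₀ ∈ closure A := csInf_mem_closure hAne hAbdd
  have hyc : ContinuousAt (fun t => (γ t).2) t₀ := ycont horb ht₀I
  haveI : (𝓝[A] t₀).NeBot := mem_closure_iff_nhdsWithin_neBot.mp hclos
  have hyt₀le : (γ t₀).2 ≤ y₀ := by
    refine le_of_tendsto (hyc.continuousWithinAt (s := A)) ?_
    filter_upwards [self_mem_nhdsWithin] with a ha
    exact ha.2
  have hct₀' : c < t₀ :=
    lt_of_le_of_ne hct₀ (fun he => by rw [← he] at hyt₀le; linarith)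
  have hbefore : ∀ t ∈ Ico c t₀, y₀ < (γ t).2 := by
    intro t ht
    by_contra hcon2
    push_neg at hcon2
    have htA : t ∈ A := ⟨⟨ht.1, le_trans ht.2.le ht₀s'⟩, hcon2⟩
    exact absurd (csInf_le hAbdd htA) (not_le.mpr ht.2)
  have hyt₀ge : y₀ ≤ (γ t₀).2 := by
    have hclos2 : t₀ ∈ closure (Ico c t₀) := by
      rw [closure_Ico (ne_of_lt hct₀')]
      exact ⟨hct₀, le_rfl⟩
    haveI : (𝓝[Ico c t₀] t₀).NeBot := mem_closure_iff_nhdsWithin_neBot.mp hclos2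
    refine ge_of_tendsto (hyc.continuousWithinAt (s := Ico c t₀)) ?_
    filter_upwards [self_mem_nhdsWithin] with a ha
    exact (hbefore a ha).le
  have hyt₀ : (γ t₀).2 = y₀ := le_antisymm hyt₀le hyt₀ge
  obtain ⟨hx, hy1, hy2⟩ := orbit_mem horb ht₀I
  have hy₀sq : 0 < Real.sqrt (1 - y₀ ^ 2) :=
    sqrt_one_sub_sq_pos (by linarith [hy₀mem.1]) hy₀mem.2
  have hhy₀ : 0 < h y₀ := by linarith
  have hUpos : 0 < Ufun h γ t₀ := by
    simp only [Ufun, hyt₀]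
    have h4 := my_tanh_lt_one ((γ t₀).1)
    have h5 := my_tanh_pos hx
    nlinarith
  have hydpos := yderiv_pos horb ht₀I hUpos
  have hev2 := eventually_lt_left (ydiff horb ht₀I) hydpos
  have hev3 : ∀ᶠ t in 𝓝[<] t₀, t ∈ Ioo c t₀ := Ioo_mem_nhdsLT hct₀'
  obtain ⟨t, ht1, ht2⟩ := (hev2.and hev3).exists
  have := hbefore t ⟨ht2.1.le, ht2.2⟩
  rw [hyt₀] at ht1
  linarith

/-- `U` cannot be positive anywhere on the orbit. -/
lemma U_not_pos (hC : ContDiffOn ℝ 1 h (Set.Icc (-1 : ℝ) 1))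
    (horb : IsOrbitOn h 1 γ I)
    (hpos : ∀ ⦃s : ℝ⦄, s ∈ I → 0 < s)
    (hdc : ∀ ⦃s t : ℝ⦄, s ∈ I → 0 < t → t ≤ s → t ∈ I)
    (hlim : Tendsto (fun s => (γ s).2) (𝓝[>] (0:ℝ)) (𝓝 1))
    (hy₀mem : y₀ ∈ Set.Ico (0:ℝ) 1) (hy₀eq : 2 * h y₀ = Real.sqrt (1 - y₀ ^ 2))
    {s₂ : ℝ} (hs₂ : s₂ ∈ I) : ¬ (0 < Ufun h γ s₂) := by
  intro hU₂
  -- Step 1: U > 0 on all of (0, s₂]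
  have key : ∀ t, 0 < t → t ≤ s₂ → 0 < Ufun h γ t := by
    by_contra hcon
    push_neg at hcon
    obtain ⟨s₃, hs₃pos, hs₃le, hU₃⟩ := hcon
    have hs₃I : s₃ ∈ I := hdc hs₂ hs₃pos hs₃le
    have hs₃ne : s₃ ≠ s₂ := fun he => by rw [he] at hU₃; linarith
    have hs₃lt : s₃ < s₂ := lt_of_le_of_ne hs₃le hs₃ne
    set W := {t ∈ Icc s₃ s₂ | Ufun h γ t ≤ 0} with hW
    have hWne : W.Nonempty := ⟨s₃, ⟨le_rfl, hs₃le⟩, hU₃⟩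
    have hWbdd : BddAbove W := ⟨s₂, fun a ha => ha.1.2⟩
    set t₀ := sSup W with ht₀
    have hs₃t₀ : s₃ ≤ t₀ := le_csSup hWbdd ⟨⟨le_rfl, hs₃le⟩, hU₃⟩
    have ht₀s₂ : t₀ ≤ s₂ := csSup_le hWne fun a ha => ha.1.2
    have ht₀I : t₀ ∈ I := hdc hs₂ (lt_of_lt_of_le hs₃pos hs₃t₀) ht₀s₂
    have hUc : ContinuousAt (Ufun h γ) t₀ := Ucont hC horb ht₀I
    have hclos : t₀ ∈ closure W := csSup_mem_closure hWne hWbdd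
    haveI : (𝓝[W] t₀).NeBot := mem_closure_iff_nhdsWithin_neBot.mp hclos
    have hUt₀le : Ufun h γ t₀ ≤ 0 := by
      refine le_of_tendsto (hUc.continuousWithinAt (s := W)) ?_
      filter_upwards [self_mem_nhdsWithin] with a ha
      exact ha.2
    have ht₀lt : t₀ < s₂ :=
      lt_of_le_of_ne ht₀s₂ (fun he => by rw [he] at hUt₀le; linarith)
    have hafter : ∀ t ∈ Ioc t₀ s₂, 0 < Ufun h γ t := by
      intro t ht
      by_contra hcon2
      push_neg at hcon2
      have htW : t ∈ W := ⟨⟨le_trans hs₃t₀ ht.1.le, ht.2⟩, hcon2⟩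
      exact absurd (le_csSup hWbdd htW) (not_le.mpr ht.1)
    have hUt₀ge : 0 ≤ Ufun h γ t₀ := by
      have hclos2 : t₀ ∈ closure (Ioc t₀ s₂) := by
        rw [closure_Ioc (ne_of_lt ht₀lt)]
        exact ⟨le_rfl, ht₀lt.le⟩
      haveI : (𝓝[Ioc t₀ s₂] t₀).NeBot := mem_closure_iff_nhdsWithin_neBot.mp hclos2
      refine ge_of_tendsto (hUc.continuousWithinAt (s := Ioc t₀ s₂)) ?_
      filter_upwards [self_mem_nhdsWithin] with a ha
      exact (hafter a ha).le
    have hUt₀ : Ufun h γ t₀ = 0 := le_antisymm hUt₀le hUt₀ge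
    -- derivative of U at t₀ is negative
    have hypos : 0 < (γ t₀).2 :=
      lt_of_le_of_lt hy₀mem.1 (y_gt_y0 horb hpos hdc hlim hy₀mem hy₀eq ht₀I)
    have hhpos : 0 < h ((γ t₀).2) := h_pos_at_U_zero horb ht₀I hUt₀
    have hUd := hasDerivAt_U hC horb ht₀I hUt₀
    have hUdneg : -(2 * h ((γ t₀).2) * (1 / Real.cosh ((γ t₀).1) ^ 2) * (γ t₀).2) < 0 := by
      have := Real.cosh_pos ((γ t₀).1)
      have h9 : 0 < 1 / Real.cosh ((γ t₀).1) ^ 2 := by positivity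
      have h10 : 0 < 2 * h ((γ t₀).2) * (1 / Real.cosh ((γ t₀).1) ^ 2) * (γ t₀).2 :=
        mul_pos (mul_pos (by linarith) h9) hypos
      linarith
    have hev2 := eventually_lt_right hUd hUdneg
    have hev3 : ∀ᶠ t in 𝓝[>] t₀, t ∈ Ioo t₀ s₂ := Ioo_mem_nhdsGT ht₀lt
    obtain ⟨t, ht1, ht2⟩ := (hev2.and hev3).exists
    rw [hUt₀] at ht1
    exact absurd ht1 (not_lt.mpr (hafter t ⟨ht2.1, ht2.2.le⟩).le)
  -- Step 2: contradiction with y → 1 at 0⁺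
  have hs₂pos : 0 < s₂ := hpos hs₂
  have hmono : StrictMonoOn (fun t => (γ t).2) (Ioc 0 s₂) := by
    apply strictMonoOn_of_deriv_pos (convex_Ioc 0 s₂)
    · intro t ht
      exact ((ydiff horb (hdc hs₂ ht.1 ht.2)).continuousAt).continuousWithinAt
    · intro t ht
      rw [interior_Ioc] at ht
      have htI : t ∈ I := hdc hs₂ ht.1 ht.2.le
      rw [(ydiff horb htI).deriv]
      exact yderiv_pos horb htI (key t ht.1 ht.2.le)
  obtain ⟨hx₂, hy₂1, hy₂2⟩ := orbit_mem horb hs₂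
  have hev : ∀ᶠ s in 𝓝[>] (0:ℝ), (γ s₂).2 < (γ s).2 := hlim.eventually_const_lt hy₂2
  have hev2 : ∀ᶠ s in 𝓝[>] (0:ℝ), s ∈ Ioo 0 s₂ := Ioo_mem_nhdsGT hs₂pos
  obtain ⟨t, ht1, ht2⟩ := (hev.and hev2).exists
  have := hmono ⟨ht2.1, ht2.2.le⟩ ⟨hs₂pos, le_rfl⟩ ht2.2
  linarith

/-- `U < 0` everywhere on the orbit. -/
lemma U_neg (hC : ContDiffOn ℝ 1 h (Set.Icc (-1 : ℝ) 1))
    (horb : IsOrbitOn h 1 γ I)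
    (hpos : ∀ ⦃s : ℝ⦄, s ∈ I → 0 < s)
    (hdc : ∀ ⦃s t : ℝ⦄, s ∈ I → 0 < t → t ≤ s → t ∈ I)
    (hlim : Tendsto (fun s => (γ s).2) (𝓝[>] (0:ℝ)) (𝓝 1))
    (hy₀mem : y₀ ∈ Set.Ico (0:ℝ) 1) (hy₀eq : 2 * h y₀ = Real.sqrt (1 - y₀ ^ 2))
    {s : ℝ} (hs : s ∈ I) : Ufun h γ s < 0 := by
  rcases lt_trichotomy (Ufun h γ s) 0 with hlt | heq | hgt
  · exact hlt
  · exfalso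
    have hypos : 0 < (γ s).2 :=
      lt_of_le_of_lt hy₀mem.1 (y_gt_y0 horb hpos hdc hlim hy₀mem hy₀eq hs)
    have hhpos : 0 < h ((γ s).2) := h_pos_at_U_zero horb hs heq
    have hUd := hasDerivAt_U hC horb hs heq
    have hUdneg : -(2 * h ((γ s).2) * (1 / Real.cosh ((γ s).1) ^ 2) * (γ s).2) < 0 := by
      have := Real.cosh_pos ((γ s).1)
      have h9 : 0 < 1 / Real.cosh ((γ s).1) ^ 2 := by positivity
      have h10 : 0 < 2 * h ((γ s).2) * (1 / Real.cosh ((γ s).1) ^ 2) * (γ s).2 :=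
        mul_pos (mul_pos (by linarith) h9) hypos
      linarith
    have hev2 := eventually_gt_left hUd hUdneg
    have hev3 : ∀ᶠ t in 𝓝[<] s, t ∈ Ioo 0 s := Ioo_mem_nhdsLT (hpos hs)
    obtain ⟨t, ht1, ht2⟩ := (hev2.and hev3).exists
    rw [heq] at ht1
    exact U_not_pos hC horb hpos hdc hlim hy₀mem hy₀eq (hdc hs ht2.1 ht2.2.le) ht1
  · exact absurd hgt (U_not_pos hC horb hpos hdc hlim hy₀mem hy₀eq hs)

end Core2

section Limits

/-- If `f` has derivative `d`, `f` converges at `+∞` and `d` converges at `+∞`,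
then the limit of `d` is `0`. -/
lemma deriv_limit_zero {f d : ℝ → ℝ} {c lf : ℝ}
    (hf : ∀ s : ℝ, 1 ≤ s → HasDerivAt f (d s) s)
    (hfl : Tendsto f atTop (𝓝 lf)) (hdl : Tendsto d atTop (𝓝 c)) : c = 0 := by
  have hslope : ∀ s : ℝ, 1 ≤ s → ∃ ξ ∈ Ioo s (s+1), d ξ = (f (s+1) - f s)/((s+1) - s) := by
    intro s hs
    refine exists_hasDerivAt_eq_slope f d (by linarith) ?_ ?_
    · intro t ht
      exact (hf t (le_trans hs ht.1)).continuousAt.continuousWithinAt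
    · intro t ht
      exact hf t (le_trans hs ht.1.le)
  classical
  set ξ : ℝ → ℝ := fun s => if hs : 1 ≤ s then (hslope s hs).choose else s + 1 with hξ
  have hξmem : ∀ s : ℝ, 1 ≤ s → ξ s ∈ Ioo s (s+1) := by
    intro s hs
    simp only [hξ, dif_pos hs]
    exact (hslope s hs).choose_spec.1
  have hξeq : ∀ s : ℝ, 1 ≤ s → d (ξ s) = f (s+1) - f s := by
    intro s hs
    simp only [hξ, dif_pos hs]
    have h2 := (hslope s hs).choose_spec.2
    rw [h2, show s + 1 - s = 1 by ring, div_one]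
  have hξtop : Tendsto ξ atTop atTop := by
    refine tendsto_atTop_mono' atTop ?_ tendsto_id
    filter_upwards [eventually_ge_atTop (1:ℝ)] with s hs
    exact (hξmem s hs).1.le
  have h1 : Tendsto (fun s => d (ξ s)) atTop (𝓝 c) := hdl.comp hξtop
  have h2 : Tendsto (fun s => f (s+1) - f s) atTop (𝓝 (lf - lf)) :=
    (hfl.comp (tendsto_atTop_add_const_right atTop 1 tendsto_id)).sub hfl
  have h3 : Tendsto (fun s => d (ξ s)) atTop (𝓝 (lf - lf)) := by
    apply h2.congr'
    filter_upwards [eventually_ge_atTop (1:ℝ)] with s hs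
    exact (hξeq s hs).symm
  have := tendsto_nhds_unique h1 h3
  simpa using this

/-- Left-endpoint slope limit: if `f` solves an ODE on `(a,B)` with derivative converging
to `lv` and values converging to `lf` at `B⁻`, then the difference quotient based at `B`
(with value `lf` at `B`) converges to `lv`. -/
lemma slope_tendsto_left {f d : ℝ → ℝ} {B lv lf a : ℝ} (haB : a < B)
    (hf : ∀ s ∈ Ioo a B, HasDerivAt f (d s) s)
    (hd : Tendsto d (𝓝[<] B) (𝓝 lv))
    (hfl : Tendsto f (𝓝[<] B) (𝓝 lf)) :
    Tendsto (fun s => (f s - lf)/(s - B)) (𝓝[<] B) (𝓝 lv) := by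
  rw [Metric.tendsto_nhds]
  intro ε hε
  have hd' : ∀ᶠ t in 𝓝[<] B, dist (d t) lv < ε := by
    rw [Metric.tendsto_nhds] at hd
    exact hd ε hε
  obtain ⟨l', hl', hIoo⟩ := mem_nhdsLT_iff_exists_Ioo_subset.mp hd'
  rw [mem_Iio] at hl'
  set a' := max a l' with ha'
  have ha'B : a' < B := max_lt haB hl'
  -- the extended function
  set g : ℝ → ℝ := fun t => if t < B then f t else lf with hg
  have hgB : g B = lf := by simp [hg]
  have hgf : ∀ t, t < B → g t = f t := fun t ht => by simp [hg, ht]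
  have hgderiv : ∀ t ∈ Ioo a' B, HasDerivAt g (d t) t := by
    intro t ht
    refine (hf t ⟨lt_of_le_of_lt (le_max_left _ _) ht.1, ht.2⟩).congr_of_eventuallyEq ?_
    filter_upwards [Iio_mem_nhds ht.2] with u hu
    exact hgf u hu
  have hgcont : ∀ s, a' < s → ContinuousOn g (Icc s B) := by
    intro s hs
    intro t ht
    rcases lt_or_eq_of_le ht.2 with htB | htB
    · exact (hgderiv t ⟨lt_of_lt_of_le hs ht.1, htB⟩).continuousAt.continuousWithinAt
    · subst htB
      rw [ContinuousWithinAt, hgB]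
      have hsub : Icc s t ⊆ Iio t ∪ {t} := by
        intro u hu
        rcases lt_or_eq_of_le hu.2 with hu2 | hu2
        · exact Or.inl hu2
        · exact Or.inr (by simp [hu2])
      refine Tendsto.mono_left ?_ (nhdsWithin_mono _ hsub)
      rw [nhdsWithin_union]
      refine Tendsto.sup ?_ ?_
      · refine hfl.congr' ?_
        filter_upwards [self_mem_nhdsWithin] with u hu
        exact (hgf u hu).symm
      · rw [nhdsWithin_singleton]
        rw [tendsto_pure_left]
        intro U hU
        rw [hgB]
        exact mem_of_mem_nhds hU
  filter_upwards [Ioo_mem_nhdsLT ha'B] with s hs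
  obtain ⟨ξ, hξmem, hξeq⟩ := exists_hasDerivAt_eq_slope g d hs.2 (hgcont s hs.1)
    (fun t ht => hgderiv t ⟨lt_trans hs.1 ht.1, ht.2⟩)
  have heq : (f s - lf)/(s - B) = d ξ := by
    rw [hξeq, hgB, hgf s hs.2]
    rw [div_eq_div_iff (by linarith [hs.2] : s - B ≠ 0) (by linarith [hs.2] : B - s ≠ 0)]
    ring
  rw [heq]
  exact hIoo ⟨lt_of_lt_of_le (lt_of_le_of_lt (le_max_right _ _) hs.1) hξmem.1.le, hξmem.2⟩

end Limits

section Ext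

variable {h : ℝ → ℝ} {γ : ℝ → ℝ × ℝ} {I : Set ℝ} {y₀ : ℝ}

/-- Growth bound: since `x' = y < 1`, `x` grows at most linearly. -/
lemma x_growth (horb : IsOrbitOn h 1 γ I) {s₁ s : ℝ} (hsub : Set.Icc s₁ s ⊆ I)
    (hle : s₁ ≤ s) : (γ s).1 - (γ s₁).1 ≤ s - s₁ := by
  have hmono : MonotoneOn (fun t => t - (γ t).1) (Icc s₁ s) := by
    apply monotoneOn_of_deriv_nonneg (convex_Icc s₁ s)
    · intro t ht
      exact ((hasDerivAt_id t).sub (xdiff horb (hsub ht))).continuousAt.continuousWithinAt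
    · intro t ht
      rw [interior_Icc] at ht
      exact ((hasDerivAt_id t).sub (xdiff horb (hsub (Ioo_subset_Icc_self ht)))).differentiableAt.differentiableWithinAt
    · intro t ht
      rw [interior_Icc] at ht
      have htI : t ∈ I := hsub (Ioo_subset_Icc_self ht)
      have hda : deriv (fun u : ℝ => u - (γ u).1) t = 1 - (γ t).2 :=
        HasDerivAt.deriv ((hasDerivAt_id' (x := t)).sub (xdiff horb htI))
      rw [hda]
      have := (orbit_mem horb htI).2.2
      linarith
  have h2 : s₁ - (γ s₁).1 ≤ s - (γ s).1 :=
    hmono (left_mem_Icc.mpr hle) (right_mem_Icc.mpr hle) hle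
  linarith

/-- Extension of an orbit by its left limit has the expected one-sided derivative. -/
lemma left_deriv_ext {γ : ℝ → ℝ × ℝ} {G : ℝ → ℝ × ℝ} {a B : ℝ} {L v : ℝ × ℝ} (haB : a < B)
    (hd : ∀ s ∈ Ioo a B, HasDerivAt γ (G s) s)
    (hG : Tendsto G (𝓝[<] B) (𝓝 v))
    (hγ : Tendsto γ (𝓝[<] B) (𝓝 L))
    {δ : ℝ → ℝ × ℝ} (hδ : ∀ s, s ≤ B → δ s = if s < B then γ s else L) :
    HasDerivWithinAt δ v (Set.Iic B) B := by
  rw [hasDerivWithinAt_iff_tendsto_slope]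
  have hset : Set.Iic B \ {B} = Set.Iio B := by
    ext u
    simp only [mem_diff, mem_Iic, mem_singleton_iff, mem_Iio]
    constructor
    · rintro ⟨h1, h2⟩; exact lt_of_le_of_ne h1 h2
    · intro h1; exact ⟨h1.le, ne_of_lt h1⟩
  rw [hset]
  have h1 : Tendsto (fun s => ((γ s).1 - L.1)/(s - B)) (𝓝[<] B) (𝓝 v.1) :=
    slope_tendsto_left haB (fun s hs => hasDerivAt_comp_fst (hd s hs))
      ((continuous_fst.tendsto v).comp hG) ((continuous_fst.tendsto L).comp hγ)
  have h2 : Tendsto (fun s => ((γ s).2 - L.2)/(s - B)) (𝓝[<] B) (𝓝 v.2) :=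
    slope_tendsto_left haB (fun s hs => hasDerivAt_comp_snd (hd s hs))
      ((continuous_snd.tendsto v).comp hG) ((continuous_snd.tendsto L).comp hγ)
  have hcomb : Tendsto (fun s => (((γ s).1 - L.1)/(s - B), ((γ s).2 - L.2)/(s - B)))
      (𝓝[<] B) (𝓝 (v.1, v.2)) := h1.prodMk_nhds h2
  rw [Prod.mk.eta] at hcomb
  refine hcomb.congr' ?_
  filter_upwards [self_mem_nhdsWithin] with s (hs : s < B)
  have hδs : δ s = γ s := by rw [hδ s hs.le, if_pos hs]
  have hδB : δ B = L := by rw [hδ B le_rfl, if_neg (lt_irrefl B)]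
  show _ = slope δ B s
  rw [slope]
  rw [hδs, hδB]
  ext <;> simp [Prod.smul_def, div_eq_inv_mul]

end Ext

section Y0

/-- Existence of the greatest root `y₀`. -/
lemma exists_y0 {h : ℝ → ℝ} (hC : ContDiffOn ℝ 1 h (Set.Icc (-1 : ℝ) 1)) (h1 : 0 < h 1)
    (hex : ∃ ys ∈ Set.Ico (0 : ℝ) 1, 2 * h ys = Real.sqrt (1 - ys ^ 2)) :
    IsGreatest {y ∈ Set.Ico (0 : ℝ) 1 | 2 * h y = Real.sqrt (1 - y ^ 2)}
      (sSup {y ∈ Set.Ico (0 : ℝ) 1 | 2 * h y = Real.sqrt (1 - y ^ 2)}) := by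
  obtain ⟨ys, hysmem, hyseq⟩ := hex
  set S := {y ∈ Set.Ico (0 : ℝ) 1 | 2 * h y = Real.sqrt (1 - y ^ 2)} with hS
  have hSne : S.Nonempty := ⟨ys, hysmem, hyseq⟩
  have hSbdd : BddAbove S := ⟨1, fun a ha => ha.1.2.le⟩
  set u := sSup S with hu
  set f : ℝ → ℝ := fun y => 2 * h y - Real.sqrt (1 - y ^ 2) with hf
  have hfc : ContinuousOn f (Set.Icc 0 1) := by
    apply ContinuousOn.sub
    · exact continuousOn_const.mul (hC.continuousOn.mono (fun z hz => ⟨by linarith [hz.1], hz.2⟩))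
    · exact (Real.continuous_sqrt.comp (continuous_const.sub (continuous_pow 2))).continuousOn
  set C := Set.Icc (0:ℝ) 1 ∩ f ⁻¹' {0} with hC'
  have hCclosed : IsClosed C := hfc.preimage_isClosed_of_isClosed isClosed_Icc isClosed_singleton
  have hSC : S ⊆ C := by
    rintro a ⟨⟨ha0, ha1⟩, haeq⟩
    exact ⟨⟨ha0, ha1.le⟩, by simp [hf, haeq]⟩
  have huC : u ∈ C := by
    have h2 : u ∈ closure S := (isLUB_csSup hSne hSbdd).mem_closure hSne
    exact hCclosed.closure_subset (closure_mono hSC h2)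
  have hu0 : 0 ≤ u := le_trans hysmem.1 (le_csSup hSbdd ⟨hysmem, hyseq⟩)
  have hfu : 2 * h u = Real.sqrt (1 - u ^ 2) := by
    have := huC.2
    simp only [mem_preimage, mem_singleton_iff, hf] at this
    linarith
  have hu1 : u < 1 := by
    rcases lt_or_eq_of_le huC.1.2 with hlt | heq
    · exact hlt
    · exfalso
      rw [heq] at hfu
      norm_num at hfu
      linarith
  exact ⟨⟨⟨hu0, hu1⟩, hfu⟩, fun a ha => le_csSup hSbdd ha⟩

end Y0

section Exist

lemma isOpen_PhasePlane : IsOpen PhasePlane := (isOpen_Ioi).prod isOpen_Ioo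

/-- There exists at least one (nonempty) orbit. -/
lemma orbit_exists {h : ℝ → ℝ} (hC : ContDiffOn ℝ 1 h (Set.Icc (-1 : ℝ) 1)) :
    ∃ (δ : ℝ → ℝ × ℝ) (J : Set ℝ), IsOrbitOn h 1 δ J ∧ (0:ℝ) ∈ J := by
  have hp₀ : ((1:ℝ), (0:ℝ)) ∈ PhasePlane := ⟨by norm_num, by norm_num, by norm_num⟩
  obtain ⟨ψ, hψ0, ε, hε, hψ⟩ :=
    (contDiffAt_F hC hp₀).exists_forall_mem_closedBall_exists_eq_forall_mem_Ioo_hasDerivAt₀ (0:ℝ)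
  have h0mem : (0:ℝ) ∈ Ioo (0 - ε) (0 + ε) := by constructor <;> [linarith; linarith]
  have hψcont : ContinuousAt ψ 0 := (hψ 0 h0mem).continuousAt
  have hev : ∀ᶠ s in 𝓝 (0:ℝ), ψ s ∈ PhasePlane ∧ s ∈ Ioo (0 - ε) (0 + ε) := by
    refine Filter.Eventually.and ?_ (Ioo_mem_nhds (by linarith) (by linarith))
    exact hψcont.eventually_mem (isOpen_PhasePlane.mem_nhds (by rwa [hψ0]))
  obtain ⟨l, uu, hlu, hsub⟩ := mem_nhds_iff_exists_Ioo_subset.mp hev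
  refine ⟨ψ, Ioo l uu, ⟨isOpen_Ioo, Set.ordConnected_Ioo, ?_⟩, hlu⟩
  intro s hs
  obtain ⟨hmem, hIoo⟩ := hsub hs
  exact ⟨hmem, hψ s hIoo⟩

end Exist

section Extension

variable {h : ℝ → ℝ} {γ : ℝ → ℝ × ℝ} {y₀ : ℝ}

/-- If the orbit lives on a bounded interval `(0,B)`, it can be extended past `B`. -/
lemma extension_exists (hC : ContDiffOn ℝ 1 h (Set.Icc (-1 : ℝ) 1)) {B : ℝ} (hB : 0 < B)
    (horb : IsOrbitOn h 1 γ (Set.Ioo 0 B))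
    (hlim : Tendsto (fun s => (γ s).2) (𝓝[>] (0:ℝ)) (𝓝 1))
    (hy₀mem : y₀ ∈ Set.Ico (0:ℝ) 1) (hy₀eq : 2 * h y₀ = Real.sqrt (1 - y₀ ^ 2)) :
    ∃ (δ : ℝ → ℝ × ℝ) (J : Set ℝ), IsOrbitOn h 1 δ J ∧ Set.Ioo 0 B ⊆ J ∧
      Set.EqOn δ γ (Set.Ioo 0 B) ∧ B ∈ J := by
  have hpos : ∀ ⦃s : ℝ⦄, s ∈ Set.Ioo 0 B → 0 < s := fun s hs => hs.1
  have hdc : ∀ ⦃s t : ℝ⦄, s ∈ Set.Ioo 0 B → 0 < t → t ≤ s → t ∈ Set.Ioo 0 B :=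
    fun s t hs ht hts => ⟨ht, lt_of_le_of_lt hts hs.2⟩
  set s₁ := B/2 with hs₁
  have hs₁mem : s₁ ∈ Set.Ioo 0 B := ⟨by simp [hs₁]; linarith, by simp [hs₁]; linarith⟩
  have hne : (Set.Ioo s₁ B).Nonempty := nonempty_Ioo.mpr hs₁mem.2
  have hsubI : Set.Ioo s₁ B ⊆ Set.Ioo 0 B := fun t ht => ⟨lt_trans hs₁mem.1 ht.1, ht.2⟩
  have hxmono : MonotoneOn (fun s => (γ s).1) (Set.Ioo s₁ B) := by
    apply StrictMonoOn.monotoneOn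
    apply strictMonoOn_of_deriv_pos (convex_Ioo s₁ B)
    · exact fun t ht => (xdiff horb (hsubI ht)).continuousAt.continuousWithinAt
    · intro t ht
      rw [interior_Ioo] at ht
      have htI := hsubI ht
      rw [(xdiff horb htI).deriv]
      exact lt_of_le_of_lt hy₀mem.1 (y_gt_y0 horb hpos hdc hlim hy₀mem hy₀eq htI)
  have hymono : AntitoneOn (fun s => (γ s).2) (Set.Ioo s₁ B) := by
    apply StrictAntiOn.antitoneOn
    apply strictAntiOn_of_deriv_neg (convex_Ioo s₁ B)
    · exact fun t ht => (ydiff horb (hsubI ht)).continuousAt.continuousWithinAt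
    · intro t ht
      rw [interior_Ioo] at ht
      have htI := hsubI ht
      rw [(ydiff horb htI).deriv]
      exact yderiv_neg horb htI (U_neg hC horb hpos hdc hlim hy₀mem hy₀eq htI)
  have hxbdd : BddAbove ((fun s => (γ s).1) '' Set.Ioo s₁ B) := by
    refine ⟨(γ s₁).1 + B, ?_⟩
    rintro p ⟨t, ht, rfl⟩
    have hsub2 : Set.Icc s₁ t ⊆ Set.Ioo 0 B :=
      fun u hu => ⟨lt_of_lt_of_le hs₁mem.1 hu.1, lt_of_le_of_lt hu.2 ht.2⟩
    have h3 := x_growth horb hsub2 ht.1.le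
    have h4 : t - s₁ ≤ B := by
      have := ht.2; have := hs₁mem.1; linarith
    simp only []
    linarith
  have hybdd : BddBelow ((fun s => (γ s).2) '' Set.Ioo s₁ B) := by
    refine ⟨y₀, ?_⟩
    rintro p ⟨t, ht, rfl⟩
    exact (y_gt_y0 horb hpos hdc hlim hy₀mem hy₀eq (hsubI ht)).le
  set X := sSup ((fun s => (γ s).1) '' Set.Ioo s₁ B) with hX
  set Y := sInf ((fun s => (γ s).2) '' Set.Ioo s₁ B) with hY
  have hxlim : Tendsto (fun s => (γ s).1) (𝓝[<] B) (𝓝 X) :=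
    MonotoneOn.tendsto_nhdsWithin_Ioo_left hne hxmono hxbdd
  have hylim : Tendsto (fun s => (γ s).2) (𝓝[<] B) (𝓝 Y) :=
    AntitoneOn.tendsto_nhdsWithin_Ioo_left hne hymono hybdd
  set s₂ := (s₁ + B)/2 with hs₂
  have hs₂mem : s₂ ∈ Set.Ioo s₁ B := ⟨by simp [hs₂]; linarith [hs₁mem.2], by simp [hs₂]; linarith [hs₁mem.2]⟩
  have hs₂I := hsubI hs₂mem
  have hXpos : 0 < X :=
    lt_of_lt_of_le (orbit_mem horb hs₂I).1 (le_csSup hxbdd ⟨s₂, hs₂mem, rfl⟩)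
  have hY1 : Y < 1 :=
    lt_of_le_of_lt (csInf_le hybdd ⟨s₂, hs₂mem, rfl⟩) (orbit_mem horb hs₂I).2.2
  have hYneg1 : -1 < Y := by
    have : y₀ ≤ Y := by
      apply le_csInf (hne.image _)
      rintro p ⟨t, ht, rfl⟩
      exact (y_gt_y0 horb hpos hdc hlim hy₀mem hy₀eq (hsubI ht)).le
    linarith [hy₀mem.1]
  have hL : (X, Y) ∈ PhasePlane := ⟨hXpos, hYneg1, hY1⟩
  have hγlim : Tendsto γ (𝓝[<] B) (𝓝 (X, Y)) := by
    refine (hxlim.prodMk_nhds hylim).congr (fun s => ?_)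
    exact Prod.mk.eta
  have hGlim : Tendsto (fun s => F h 1 (γ s)) (𝓝[<] B) (𝓝 (F h 1 (X, Y))) :=
    ((contDiffAt_F hC hL).continuousAt.tendsto).comp hγlim
  obtain ⟨ψ, hψB, ε, hε, hψ⟩ :=
    (contDiffAt_F hC hL).exists_forall_mem_closedBall_exists_eq_forall_mem_Ioo_hasDerivAt₀ B
  have hBmem : B ∈ Set.Ioo (B - ε) (B + ε) := ⟨by linarith, by linarith⟩
  have hψcont : ContinuousAt ψ B := (hψ B hBmem).continuousAt
  have hev : ∀ᶠ s in 𝓝 B, ψ s ∈ PhasePlane ∧ s ∈ Set.Ioo (B - ε) (B + ε) :=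
    (hψcont.eventually_mem (isOpen_PhasePlane.mem_nhds (by rwa [hψB]))).and
      (Ioo_mem_nhds (by linarith) (by linarith))
  obtain ⟨l, uu, hlu, hsub⟩ := mem_nhds_iff_exists_Ioo_subset.mp hev
  set δ : ℝ → ℝ × ℝ := fun s => if s < B then γ s else ψ s with hδdef
  have hδγ : Set.EqOn δ γ (Set.Ioo 0 B) := fun s hs => by simp only [hδdef, if_pos hs.2]
  have hδψ : ∀ s, B ≤ s → δ s = ψ s := fun s hs => by
    simp only [hδdef, if_neg (not_lt.mpr hs)]
  refine ⟨δ, Set.Ioo 0 uu, ⟨isOpen_Ioo, Set.ordConnected_Ioo, ?_⟩,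
    fun t ht => ⟨ht.1, lt_trans ht.2 hlu.2⟩, hδγ, ⟨hB, hlu.2⟩⟩
  intro s hs
  rcases lt_trichotomy s B with hsB | hsB | hsB
  · have hsI : s ∈ Set.Ioo 0 B := ⟨hs.1, hsB⟩
    have heq : δ =ᶠ[𝓝 s] γ := by
      filter_upwards [Iio_mem_nhds hsB] with t ht
      simp only [hδdef, if_pos (mem_Iio.mp ht)]
    refine ⟨by rw [hδγ hsI]; exact (horb.2.2 s hsI).1, ?_⟩
    have h2 : HasDerivAt δ (F h 1 (γ s)) s :=
      (horb.2.2 s hsI).2.congr_of_eventuallyEq heq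
    rwa [hδγ hsI]
  · subst hsB
    have hδB : δ s = (X, Y) := by rw [hδψ s le_rfl, hψB]
    refine ⟨by rw [hδB]; exact hL, ?_⟩
    rw [hδB]
    have hright : HasDerivWithinAt δ (F h 1 (X, Y)) (Set.Ici s) s := by
      have h3 : HasDerivAt ψ (F h 1 (ψ s)) s := hψ s hBmem
      rw [hψB] at h3
      exact (h3.hasDerivWithinAt).congr (fun t ht => hδψ t ht) (hδψ s le_rfl)
    have hleft : HasDerivWithinAt δ (F h 1 (X, Y)) (Set.Iic s) s := by
      refine left_deriv_ext hB (fun t ht => (horb.2.2 t ht).2) hGlim hγlim ?_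
      intro t htB
      by_cases ht : t < s
      · simp only [hδdef, if_pos ht]
      · have ht2 : t = s := le_antisymm htB (not_lt.mp ht)
        subst ht2
        simp only [hδdef, if_neg ht, hψB]
    have hcomb := hleft.union hright
    rw [Set.Iic_union_Ici, hasDerivWithinAt_univ] at hcomb
    exact hcomb
  · have hmem2 : s ∈ Set.Ioo l uu := ⟨lt_trans hlu.1 hsB, hs.2⟩
    obtain ⟨hΘ, hIoo⟩ := hsub hmem2
    have heq : δ =ᶠ[𝓝 s] ψ := by
      filter_upwards [Ioi_mem_nhds hsB] with t ht
      exact hδψ t (le_of_lt (mem_Ioi.mp ht))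
    refine ⟨by rw [hδψ s hsB.le]; exact hΘ, ?_⟩
    have h4 : HasDerivAt δ (F h 1 (ψ s)) s := (hψ s hIoo).congr_of_eventuallyEq heq
    rwa [hδψ s hsB.le]

end Extension

/-- h-bowls: if `h(1) > 0` and `2h(ys) = √(1-ys²)` for some `ys ∈ [0,1)`,
then `{y ∈ [0,1) : 2h(y) = √(1-y²)}` has a maximum `y₀`, and every maximal orbit of `F₁`
on `(0,b)` emanating from `(0,1)` is defined for all `s > 0`, has strictly increasing
`x`-coordinate tending to `∞`, and strictly decreasing `y`-coordinate staying above `y₀`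
and tending to `y₀`. -/
theorem stmt5 (h : ℝ → ℝ) (hC : ContDiffOn ℝ 1 h (Set.Icc (-1 : ℝ) 1)) (h1 : 0 < h 1)
    (hex : ∃ ys ∈ Set.Ico (0 : ℝ) 1, 2 * h ys = Real.sqrt (1 - ys ^ 2)) :
    ∃ y₀ : ℝ, IsGreatest {y ∈ Set.Ico (0 : ℝ) 1 | 2 * h y = Real.sqrt (1 - y ^ 2)} y₀ ∧
      ∀ (b : EReal) (γ : ℝ → ℝ × ℝ), IsMaxOrbitOn h 1 γ (EIoo 0 b) →
        Filter.Tendsto γ (nhdsWithin 0 (Set.Ioi 0)) (nhds ((0 : ℝ), (1 : ℝ))) →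
        b = ⊤ ∧
        StrictMonoOn (fun s => (γ s).1) (Set.Ioi 0) ∧
        Filter.Tendsto (fun s => (γ s).1) Filter.atTop Filter.atTop ∧
        StrictAntiOn (fun s => (γ s).2) (Set.Ioi 0) ∧
        (∀ s ∈ Set.Ioi (0 : ℝ), y₀ < (γ s).2) ∧
        Filter.Tendsto (fun s => (γ s).2) Filter.atTop (nhds y₀) := by
  obtain hbest := exists_y0 hC h1 hex
  set y₀ := sSup {y ∈ Set.Ico (0 : ℝ) 1 | 2 * h y = Real.sqrt (1 - y ^ 2)} with hy₀def
  have hy₀mem : y₀ ∈ Set.Ico (0:ℝ) 1 := hbest.1.1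
  have hy₀eq : 2 * h y₀ = Real.sqrt (1 - y₀ ^ 2) := hbest.1.2
  refine ⟨y₀, hbest, ?_⟩
  intro b γ hmax hlim0
  have hlimy : Tendsto (fun s => (γ s).2) (𝓝[>] (0:ℝ)) (𝓝 1) :=
    (continuous_snd.tendsto ((0:ℝ), (1:ℝ))).comp hlim0
  -- b must be positive
  have h0b : (0 : EReal) < b := by
    by_contra hcon
    push_neg at hcon
    have hempty : EIoo 0 b = ∅ := by
      ext s
      simp only [EIoo, mem_setOf_eq, mem_empty_iff_false, iff_false, not_and]
      intro h2 h3
      exact absurd (lt_trans h2 h3) (not_lt.mpr hcon)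
    obtain ⟨δ, J, horbJ, h0J⟩ := orbit_exists hC
    have := hmax.2 δ J horbJ (by rw [hempty]; exact empty_subset J)
      (by rw [hempty]; exact fun s hs => absurd hs (notMem_empty s))
    rw [this, hempty] at h0J
    exact absurd h0J (notMem_empty 0)
  -- b must be ⊤
  have hbtop : b = ⊤ := by
    by_contra hcon
    have hbbot : b ≠ ⊥ := ne_of_gt (lt_trans EReal.bot_lt_zero h0b)
    set B := b.toReal with hBdef
    have hbB : b = (B : EReal) := (EReal.coe_toReal hcon hbbot).symm
    have hB : 0 < B := by
      rw [hbB] at h0b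
      exact EReal.coe_pos.mp h0b
    have hIeq : EIoo 0 b = Set.Ioo 0 B := by
      ext s
      rw [hbB]
      simp only [EIoo, mem_setOf_eq, Set.mem_Ioo, EReal.coe_pos, EReal.coe_lt_coe_iff]
    have horb : IsOrbitOn h 1 γ (Set.Ioo 0 B) := hIeq ▸ hmax.1
    obtain ⟨δ, J, horbJ, hsubJ, heqJ, hBJ⟩ :=
      extension_exists hC hB horb hlimy hy₀mem hy₀eq
    have hJeq := hmax.2 δ J horbJ (by rw [hIeq]; exact hsubJ) (by rw [hIeq]; exact heqJ)
    rw [hJeq, hIeq] at hBJ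
    exact absurd hBJ.2 (lt_irrefl B)
  subst hbtop
  have hIeq : EIoo (0:EReal) ⊤ = Set.Ioi (0:ℝ) := by
    ext s
    simp only [EIoo, mem_setOf_eq, mem_Ioi, EReal.coe_lt_top, and_true, EReal.coe_pos]
  have horb : IsOrbitOn h 1 γ (Set.Ioi 0) := hIeq ▸ hmax.1
  have hpos : ∀ ⦃s : ℝ⦄, s ∈ Set.Ioi (0:ℝ) → 0 < s := fun s hs => hs
  have hdc : ∀ ⦃s t : ℝ⦄, s ∈ Set.Ioi (0:ℝ) → 0 < t → t ≤ s → t ∈ Set.Ioi (0:ℝ) :=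
    fun s t _ ht _ => ht
  -- strict monotonicity of x, strict antitonicity of y, y > y₀
  have ygt : ∀ s ∈ Set.Ioi (0:ℝ), y₀ < (γ s).2 :=
    fun s hs => y_gt_y0 horb hpos hdc hlimy hy₀mem hy₀eq hs
  have xmono : StrictMonoOn (fun s => (γ s).1) (Set.Ioi 0) := by
    apply strictMonoOn_of_deriv_pos (convex_Ioi 0)
    · exact fun t ht => (xdiff horb ht).continuousAt.continuousWithinAt
    · intro t ht
      rw [interior_Ioi] at ht
      rw [(xdiff horb ht).deriv]
      exact lt_of_le_of_lt hy₀mem.1 (ygt t ht)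
  have yanti : StrictAntiOn (fun s => (γ s).2) (Set.Ioi 0) := by
    apply strictAntiOn_of_deriv_neg (convex_Ioi 0)
    · exact fun t ht => (ydiff horb ht).continuousAt.continuousWithinAt
    · intro t ht
      rw [interior_Ioi] at ht
      rw [(ydiff horb ht).deriv]
      exact yderiv_neg horb ht (U_neg hC horb hpos hdc hlimy hy₀mem hy₀eq ht)
  have hmax1 : ∀ s : ℝ, max s 1 ∈ Set.Ioi (0:ℝ) :=
    fun s => lt_of_lt_of_le one_pos (le_max_right s 1)
  -- limit of y at infinity exists
  obtain ⟨ℓ, hylim⟩ : ∃ ℓ, Tendsto (fun s => (γ s).2) atTop (𝓝 ℓ) := by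
    have hanti : Antitone (fun s => (γ (max s 1)).2) := by
      intro s t hst
      exact (yanti.antitoneOn) (hmax1 s) (hmax1 t) (max_le_max hst le_rfl)
    rcases tendsto_of_antitone hanti with hbot | ⟨ℓ, hℓ⟩
    · exfalso
      obtain ⟨s, hs⟩ := (hbot.eventually (eventually_lt_atBot y₀)).exists
      exact absurd hs (not_lt.mpr (ygt _ (hmax1 s)).le)
    · refine ⟨ℓ, hℓ.congr' ?_⟩
      filter_upwards [eventually_ge_atTop (1:ℝ)] with s hs
      rw [max_eq_left hs]
  have hybound : y₀ ≤ ℓ := by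
    refine ge_of_tendsto hylim ?_
    filter_upwards [eventually_ge_atTop (1:ℝ)] with s hs
    exact (ygt s (mem_Ioi.mpr (by linarith))).le
  have hyup : ℓ ≤ (γ 1).2 := by
    refine le_of_tendsto hylim ?_
    filter_upwards [eventually_ge_atTop (1:ℝ)] with s hs
    rcases eq_or_lt_of_le hs with he | hlt
    · rw [← he]
    · exact ((yanti (mem_Ioi.mpr one_pos) (mem_Ioi.mpr (by linarith)) hlt)).le
  have hy1lt : (γ 1).2 < 1 := (orbit_mem horb (mem_Ioi.mpr one_pos)).2.2
  have hℓlt1 : ℓ < 1 := lt_of_le_of_lt hyup hy1lt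
  have hℓ0 : 0 ≤ ℓ := le_trans hy₀mem.1 hybound
  -- x tends to infinity
  have hxtop : Tendsto (fun s => (γ s).1) atTop atTop := by
    have hmono : Monotone (fun s => (γ (max s 1)).1) := by
      intro s t hst
      exact (xmono.monotoneOn) (hmax1 s) (hmax1 t) (max_le_max hst le_rfl)
    rcases tendsto_of_monotone hmono with htop | ⟨Xl, hX⟩
    · refine htop.congr' ?_
      filter_upwards [eventually_ge_atTop (1:ℝ)] with s hs
      rw [max_eq_left hs]
    · exfalso
      have hxlim : Tendsto (fun s => (γ s).1) atTop (𝓝 Xl) := by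
        refine hX.congr' ?_
        filter_upwards [eventually_ge_atTop (1:ℝ)] with s hs
        rw [max_eq_left hs]
      have hf : ∀ s : ℝ, 1 ≤ s → HasDerivAt (fun t => (γ t).1) ((γ s).2) s :=
        fun s hs => xdiff horb (mem_Ioi.mpr (by linarith))
      have hl0 : ℓ = 0 := deriv_limit_zero hf hxlim hylim
      have hy₀0 : y₀ = 0 := le_antisymm (by rw [← hl0]; exact hybound) hy₀mem.1
      have hylim0 : Tendsto (fun s => (γ s).2) atTop (𝓝 0) := hl0 ▸ hylim
      have hX1 : 0 < Xl := by
        have hx1pos : 0 < (γ 1).1 := (orbit_mem horb (mem_Ioi.mpr one_pos)).1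
        have : (γ 1).1 ≤ Xl := by
          refine ge_of_tendsto hxlim ?_
          filter_upwards [eventually_ge_atTop (1:ℝ)] with s hs
          rcases eq_or_lt_of_le hs with he | hlt
          · rw [← he]
          · exact (xmono (mem_Ioi.mpr one_pos) (mem_Ioi.mpr (by linarith)) hlt).le
        linarith
      have hL' : ((Xl : ℝ), (0:ℝ)) ∈ PhasePlane := ⟨hX1, by norm_num, by norm_num⟩
      have hgl : Tendsto γ atTop (𝓝 (Xl, 0)) := by
        refine (hxlim.prodMk_nhds hylim0).congr (fun s => ?_)
        exact Prod.mk.eta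
      have hdl : Tendsto (fun s => (F h 1 (γ s)).2) atTop (𝓝 ((F h 1 (Xl, 0)).2)) :=
        (continuous_snd.tendsto _).comp (((contDiffAt_F hC hL').continuousAt.tendsto).comp hgl)
      have hg : ∀ s : ℝ, 1 ≤ s → HasDerivAt (fun t => (γ t).2) ((F h 1 (γ s)).2) s :=
        fun s hs => ydiff horb (mem_Ioi.mpr (by linarith))
      have hzero : (F h 1 (Xl, 0)).2 = 0 := deriv_limit_zero hg hylim0 hdl
      have h0val : 2 * h 0 = 1 := by
        have h2 := hy₀eq
        rw [hy₀0] at h2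
        norm_num [Real.sqrt_one] at h2
        linarith
      have hexp : (F h 1 (Xl, 0)).2 = 1 / Real.tanh Xl - 1 := by
        simp only [F]
        rw [show (1:ℝ) - 0 ^ 2 = 1 by norm_num, Real.sqrt_one]
        linear_combination -h0val
      rw [hexp] at hzero
      have ht0 : 0 < Real.tanh Xl := my_tanh_pos hX1
      have ht1 : Real.tanh Xl < 1 := my_tanh_lt_one Xl
      rw [sub_eq_zero] at hzero
      field_simp [ne_of_gt ht0] at hzero
      linarith
  -- final: the limit of y is y₀
  have hℓy₀ : ℓ = y₀ := by
    have hsqpos : 0 < Real.sqrt (1 - ℓ ^ 2) := sqrt_one_sub_sq_pos (by linarith) hℓlt1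
    have hsq : Real.sqrt (1 - ℓ ^ 2) ^ 2 = 1 - ℓ ^ 2 :=
      Real.sq_sqrt (by nlinarith)
    have H1 : Tendsto (fun s => 1 - (γ s).2 ^ 2) atTop (𝓝 (1 - ℓ ^ 2)) :=
      tendsto_const_nhds.sub (hylim.pow 2)
    have H2 : Tendsto (fun s => Real.tanh ((γ s).1)) atTop (𝓝 1) :=
      my_tendsto_tanh_atTop.comp hxtop
    have H3 : Tendsto (fun s => (1 - (γ s).2 ^ 2) / Real.tanh ((γ s).1)) atTop
        (𝓝 ((1 - ℓ ^ 2) / 1)) := H1.div H2 one_ne_zero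
    have H4 : Tendsto (fun s => h ((γ s).2)) atTop (𝓝 (h ℓ)) :=
      ((hC.contDiffAt (Icc_mem_nhds (by linarith) (by linarith))).continuousAt.tendsto).comp hylim
    have H5 : Tendsto (fun s => Real.sqrt (1 - (γ s).2 ^ 2)) atTop
        (𝓝 (Real.sqrt (1 - ℓ ^ 2))) :=
      (Real.continuous_sqrt.tendsto _).comp H1
    have hc : Tendsto (fun s => (F h 1 (γ s)).2) atTop
        (𝓝 ((1 - ℓ ^ 2) / 1 - 2 * 1 * h ℓ * Real.sqrt (1 - ℓ ^ 2))) :=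
      H3.sub (((tendsto_const_nhds (x := (2*1:ℝ))).mul H4).mul H5)
    have hg : ∀ s : ℝ, 1 ≤ s → HasDerivAt (fun t => (γ t).2) ((F h 1 (γ s)).2) s :=
      fun s hs => ydiff horb (mem_Ioi.mpr (by linarith))
    have hc0 : (1 - ℓ ^ 2) / 1 - 2 * 1 * h ℓ * Real.sqrt (1 - ℓ ^ 2) = 0 :=
      deriv_limit_zero hg hylim hc
    rw [div_one] at hc0
    have h6 : 1 - ℓ ^ 2 = 2 * h ℓ * Real.sqrt (1 - ℓ ^ 2) := by linarith
    have h7 : Real.sqrt (1 - ℓ ^ 2) * Real.sqrt (1 - ℓ ^ 2)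
        = (2 * h ℓ) * Real.sqrt (1 - ℓ ^ 2) := by nlinarith
    have h8 : Real.sqrt (1 - ℓ ^ 2) = 2 * h ℓ :=
      mul_right_cancel₀ (ne_of_gt hsqpos) h7
    have hℓS : ℓ ∈ {y ∈ Set.Ico (0 : ℝ) 1 | 2 * h y = Real.sqrt (1 - y ^ 2)} :=
      ⟨⟨hℓ0, hℓlt1⟩, h8.symm⟩
    exact le_antisymm (hbest.2 hℓS) hybound
  exact ⟨rfl, xmono, hxtop, yanti, ygt, hℓy₀ ▸ hylim⟩
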